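/- arXiv:1312.0278 — 3 statements merged into one kernel-verified Lean document; each statement's English description precedes it below -/
import Mathlib

section
/- For any natural numbers N ≥ 1 and d ≥ 1, the series ∑_{m ∈ Σ_{d,N}} 1/m converges (has a finite value), where Σ_{d,N} is the set of natural numbers expressible as a sum of exactly d elements of Π_N. -/
/-- `IsSmooth N m` : `m` is a positive natural number all of whose prime factors are `≤ N`,
i.e. `m ∈ Π_N`. -/
def IsSmooth (N m : ℕ) : Prop := 0 < m ∧ ∀ p : ℕ, p.Prime → p ∣ m → p ≤ N

/-- `SigmaSet d N` = `Σ_{d,N}`, sums of exactly `d` elements of `Π_N`. -/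
def SigmaSet (d N : ℕ) : Set ℕ :=
  {m | ∃ f : Fin d → ℕ, (∀ i, IsSmooth N (f i)) ∧ ∑ i, f i = m}

lemma isSmooth_mem_smoothNumbers {N m : ℕ} (h : IsSmooth N m) :
    m ∈ Nat.smoothNumbers (N + 1) := by
  refine ⟨h.1.ne', fun p hp ↦ ?_⟩
  rw [Nat.mem_primeFactorsList h.1.ne'] at hp
  exact Nat.lt_succ_of_le (h.2 p hp.1 hp.2)

lemma summable_smooth_rpow (N d : ℕ) (hd : 1 ≤ d) :
    Summable (Set.indicator (Nat.smoothNumbers (N + 1))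
      (fun m : ℕ ↦ (m : ℝ) ^ (-(1 / (d : ℝ))))) := by
  set e : ℝ := -(1 / (d : ℝ)) with he
  have hdpos : (0 : ℝ) < d := by exact_mod_cast hd
  have heneg : e < 0 := by
    rw [he]
    simp only [neg_neg, neg_lt, neg_zero]
    positivity
  have hf₁ : (((1 : ℕ) : ℝ)) ^ e = 1 := by simp
  have hmul : ∀ {m n : ℕ}, Nat.Coprime m n →
      (((m * n : ℕ)) : ℝ) ^ e = ((m : ℕ) : ℝ) ^ e * ((n : ℕ) : ℝ) ^ e := by
    intro m n _
    rw [Nat.cast_mul, Real.mul_rpow (Nat.cast_nonneg m) (Nat.cast_nonneg n)]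
  have hsum : ∀ {p : ℕ}, p.Prime → Summable (fun n : ℕ ↦ ‖((p ^ n : ℕ) : ℝ) ^ e‖) := by
    intro p hp
    have hp1 : (1 : ℝ) < (p : ℝ) := by exact_mod_cast hp.one_lt
    have hlt : (p : ℝ) ^ e < 1 := Real.rpow_lt_one_of_one_lt_of_neg hp1 heneg
    have hnn : (0 : ℝ) ≤ (p : ℝ) ^ e := Real.rpow_nonneg (Nat.cast_nonneg p) _
    have hkey : ∀ n : ℕ, ‖((p ^ n : ℕ) : ℝ) ^ e‖ = ((p : ℝ) ^ e) ^ n := by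
      intro n
      rw [Nat.cast_pow, ← Real.rpow_natCast (p : ℝ) n, ← Real.rpow_mul (Nat.cast_nonneg p),
        mul_comm, Real.rpow_mul (Nat.cast_nonneg p), Real.rpow_natCast,
        Real.norm_eq_abs, abs_of_nonneg (pow_nonneg hnn n)]
    simpa only [hkey] using summable_geometric_of_lt_one hnn hlt
  have H := (EulerProduct.summable_and_hasSum_smoothNumbers_prod_primesBelow_tsum
    (f := fun m : ℕ ↦ (m : ℝ) ^ e) hf₁ hmul hsum (N + 1)).1
  have H' : Summable (fun m : Nat.smoothNumbers (N + 1) ↦ ((m : ℕ) : ℝ) ^ e) := H.of_norm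
  exact summable_subtype_iff_indicator.mp H'

lemma summable_pi_prod {g : ℕ → ℝ} (hg : Summable g) (hg0 : ∀ n, 0 ≤ g n) (d : ℕ) :
    Summable (fun f : Fin d → ℕ ↦ ∏ i, g (f i)) := by
  induction d with
  | zero => exact Summable.of_finite
  | succ n ih =>
    have h2 : Summable (fun q : ℕ × (Fin n → ℕ) ↦ g q.1 * ∏ i, g (q.2 i)) :=
      Summable.mul_of_nonneg (f := g) (g := fun f : Fin n → ℕ ↦ ∏ i, g (f i)) hg ih
        (fun n ↦ hg0 n) (fun f ↦ Finset.prod_nonneg fun i _ ↦ hg0 _)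
    have := (Fin.consEquiv (fun _ : Fin (n + 1) ↦ ℕ)).symm.summable_iff.mpr h2
    refine this.congr fun f ↦ ?_
    simp [Fin.consEquiv, Fin.prod_univ_succ, Fin.tail]

theorem summable_inv_sigmaSet (N d : ℕ) (hN : 1 ≤ N) (hd : 1 ≤ d) :
    Summable (fun m : SigmaSet d N => (1 : ℝ) / (m : ℕ)) := by
  classical
  set e : ℝ := -(1 / (d : ℝ)) with he
  set g : ℕ → ℝ := Set.indicator (Nat.smoothNumbers (N + 1))
      (fun m : ℕ ↦ (m : ℝ) ^ e) with hgdef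
  have hg : Summable g := summable_smooth_rpow N d hd
  have hg0 : ∀ n, 0 ≤ g n :=
    fun n ↦ Set.indicator_nonneg (fun m _ ↦ Real.rpow_nonneg (Nat.cast_nonneg m) _) n
  have hdpos : (0 : ℝ) < d := by exact_mod_cast hd
  -- choose representatives
  have hrep : ∀ m : SigmaSet d N, ∃ f : Fin d → ℕ,
      (∀ i, IsSmooth N (f i)) ∧ ∑ i, f i = (m : ℕ) := fun m ↦ m.2
  choose rep hrep1 hrep2 using hrep
  have hinj : Function.Injective rep := by
    intro a b hab
    have : (a : ℕ) = (b : ℕ) := by rw [← hrep2 a, ← hrep2 b, hab]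
    exact Subtype.ext this
  have hbig : Summable (fun m : SigmaSet d N ↦ ∏ i, g (rep m i)) :=
    (summable_pi_prod hg hg0 d).comp_injective hinj
  refine hbig.of_nonneg_of_le (fun m ↦ by positivity) fun m ↦ ?_
  -- the comparison
  have hpos : ∀ i, 0 < rep m i := fun i ↦ (hrep1 m i).1
  have hmpos : 0 < (m : ℕ) := by
    rw [← hrep2 m]
    have : (0 : ℕ) < d := hd
    refine Finset.sum_pos (fun i _ ↦ hpos i) ?_
    simpa [Finset.univ_nonempty_iff, ← Fin.pos_iff_nonempty] using this
  have hle : ∀ i, (rep m i : ℝ) ≤ ((m : ℕ) : ℝ) := by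
    intro i
    rw [← hrep2 m]
    exact_mod_cast Finset.single_le_sum (f := rep m) (fun j _ ↦ Nat.zero_le _)
      (Finset.mem_univ i)
  have hgval : ∀ i, g (rep m i) = (rep m i : ℝ) ^ e := fun i ↦
    Set.indicator_of_mem (isSmooth_mem_smoothNumbers (hrep1 m i)) _
  have hmR : (0 : ℝ) < ((m : ℕ) : ℝ) := by exact_mod_cast hmpos
  -- ∏ (rep m i)^(1/d) ≤ m
  have key : ∏ i : Fin d, (rep m i : ℝ) ^ ((1 : ℝ) / d) ≤ ((m : ℕ) : ℝ) := by
    calc ∏ i : Fin d, (rep m i : ℝ) ^ ((1 : ℝ) / d)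
        ≤ ∏ _i : Fin d, ((m : ℕ) : ℝ) ^ ((1 : ℝ) / d) := by
          refine Finset.prod_le_prod (fun i _ ↦ Real.rpow_nonneg (Nat.cast_nonneg _) _)
            (fun i _ ↦ Real.rpow_le_rpow (Nat.cast_nonneg _) (hle i) (by positivity))
      _ = ((m : ℕ) : ℝ) := by
          rw [Finset.prod_const, Finset.card_univ, Fintype.card_fin,
            ← Real.rpow_natCast (((m : ℕ) : ℝ) ^ ((1 : ℝ) / d)) d,
            ← Real.rpow_mul hmR.le]
          rw [one_div, inv_mul_cancel₀ (ne_of_gt hdpos), Real.rpow_one]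
  have hprodpos : 0 < ∏ i : Fin d, (rep m i : ℝ) ^ ((1 : ℝ) / d) :=
    Finset.prod_pos fun i _ ↦ Real.rpow_pos_of_pos (by exact_mod_cast hpos i) _
  calc (1 : ℝ) / ((m : ℕ) : ℝ)
      ≤ 1 / ∏ i : Fin d, (rep m i : ℝ) ^ ((1 : ℝ) / d) :=
        one_div_le_one_div_of_le hprodpos key
    _ = ∏ i : Fin d, g (rep m i) := by
        rw [one_div, ← Finset.prod_inv_distrib]
        refine Finset.prod_congr rfl fun i _ ↦ ?_
        rw [hgval i, he, Real.rpow_neg (Nat.cast_nonneg _)]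
end

section
/- Let π : (B,j) → (A,i) be a covering of finite edge-indexed graphs where (A,i) is a 3-cycle with vertices v_1,v_2,v_3 and directed edges e_1 (v_1→v_2), e_2 (v_2→v_3), e_3 (v_3→v_1) with i(e_l) = p_l ≥ 3 and i(ē_l) = 2 for all l. Suppose that for each l and each vertex v ∈ π^{-1}(v_l), at least 3 lifts of e_l start at v. Then no such covering exists, i.e., B must be empty, contradicting surjectivity. -/
/-- A graph in the sense of Serre. -/
structure GraphData (V E : Type) where
  bar : E → E
  bar_invol : ∀ e, bar (bar e) = e
  bar_ne : ∀ e, bar e ≠ e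
  ini : E → V

/-- The 3-cycle: vertices `ZMod 3`; edge `(l, false)` is `e_l : v_l → v_{l+1}` and
`(l, true)` is its inverse `ē_l`. -/
def triangleGraph : GraphData (ZMod 3) (ZMod 3 × Bool) where
  bar e := (e.1, !e.2)
  bar_invol e := by simp
  bar_ne e := by simp [Prod.ext_iff]
  ini e := if e.2 then e.1 + 1 else e.1

open Finset in
/-- There is no covering of edge-indexed graphs onto the 3-cycle with indices
`i(e_l) = p_l ≥ 3`, `i(ē_l) = 2`, in which every vertex over `v_l` emits at least 3 lifts
of `e_l`. -/
theorem no_triangle_covering_with_three_lifts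
    (p : ZMod 3 → ℕ) (hp : ∀ l, 3 ≤ p l)
    (VB EB : Type) [Fintype VB] [Fintype EB] [DecidableEq VB]
    (GB : GraphData VB EB)
    (j : EB → ℕ) (hj : ∀ f, 0 < j f)
    (pV : VB → ZMod 3) (pE : EB → ZMod 3 × Bool)
    (hsurjV : Function.Surjective pV) (hsurjE : Function.Surjective pE)
    (hini : ∀ f, pV (GB.ini f) = triangleGraph.ini (pE f))
    (hbar : ∀ f, pE (GB.bar f) = triangleGraph.bar (pE f))
    (hcov : ∀ (v : VB) (e : ZMod 3 × Bool), triangleGraph.ini e = pV v →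
      ∑ f ∈ univ.filter (fun f => GB.ini f = v ∧ pE f = e), j f =
        (if e.2 then 2 else p e.1))
    (hlifts : ∀ (l : ZMod 3) (v : VB), pV v = l →
      3 ≤ (univ.filter (fun f => GB.ini f = v ∧ pE f = (l, false))).card) :
    False := by
  classical
  set N : ZMod 3 → ℕ := fun l => (univ.filter (fun v => pV v = l)).card with hN
  set M : ZMod 3 → ℕ := fun l => (univ.filter (fun f => pE f = (l, false))).card with hM
  -- M l ≥ 3 * N l
  have hMN : ∀ l, 3 * N l ≤ M l := by
    intro l
    have hcard : M l = ∑ v ∈ univ.filter (fun v => pV v = l),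
        ((univ.filter (fun f => pE f = (l, false))).filter (fun f => GB.ini f = v)).card := by
      apply Finset.card_eq_sum_card_fiberwise
      intro f hf
      simp only [coe_filter, mem_coe, mem_filter, mem_univ, true_and, Set.mem_setOf_eq] at hf ⊢
      rw [hini f, hf]
      rfl
    rw [hcard]
    calc 3 * N l = ∑ _v ∈ univ.filter (fun v => pV v = l), 3 := by
            rw [Finset.sum_const, hN]; ring
      _ ≤ _ := by
        apply Finset.sum_le_sum
        intro v hv
        simp only [mem_filter, mem_univ, true_and] at hv
        have := hlifts l v hv
        refine le_trans this (le_of_eq ?_)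
        congr 1
        ext f
        simp only [mem_filter, mem_univ, true_and]
        tauto
  -- M l = card of edges over (l, true)
  have hMbar : ∀ l, M l = (univ.filter (fun f => pE f = (l, true))).card := by
    intro l
    apply Finset.card_bij (fun f _ => GB.bar f)
    · intro f hf
      simp only [mem_filter, mem_univ, true_and] at hf ⊢
      rw [hbar f, hf]; rfl
    · intro f₁ h₁ f₂ h₂ h
      have := congrArg GB.bar h
      rwa [GB.bar_invol, GB.bar_invol] at this
    · intro g hg
      refine ⟨GB.bar g, ?_, (GB.bar_invol g)⟩
      simp only [mem_filter, mem_univ, true_and] at hg ⊢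
      rw [hbar g, hg]; rfl
  -- card over (l, true) ≤ 2 * N (l+1)
  have hback : ∀ l, (univ.filter (fun f => pE f = (l, true))).card ≤ 2 * N (l + 1) := by
    intro l
    have hcard : (univ.filter (fun f => pE f = (l, true))).card
        = ∑ v ∈ univ.filter (fun v => pV v = l + 1),
          ((univ.filter (fun f => pE f = (l, true))).filter (fun f => GB.ini f = v)).card := by
      apply Finset.card_eq_sum_card_fiberwise
      intro f hf
      simp only [coe_filter, mem_coe, mem_filter, mem_univ, true_and, Set.mem_setOf_eq] at hf ⊢
      rw [hini f, hf]
      rfl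
    rw [hcard]
    calc _ ≤ ∑ _v ∈ univ.filter (fun v => pV v = l + 1), 2 := by
          apply Finset.sum_le_sum
          intro v hv
          simp only [mem_filter, mem_univ, true_and] at hv
          have hsum := hcov v (l, true) (by simp [triangleGraph, hv])
          simp only [if_pos rfl] at hsum
          have hset : (univ.filter (fun f => pE f = (l, true))).filter (fun f => GB.ini f = v)
              = univ.filter (fun f => GB.ini f = v ∧ pE f = (l, true)) := by
            ext f; simp only [mem_filter, mem_univ, true_and]; tauto
          rw [hset]
          calc (univ.filter (fun f => GB.ini f = v ∧ pE f = (l, true))).card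
              = ∑ f ∈ univ.filter (fun f => GB.ini f = v ∧ pE f = (l, true)), 1 := by
                simp
            _ ≤ ∑ f ∈ univ.filter (fun f => GB.ini f = v ∧ pE f = (l, true)), j f :=
                Finset.sum_le_sum (fun f _ => hj f)
            _ = 2 := hsum
      _ = 2 * N (l + 1) := by rw [Finset.sum_const, hN]; ring
  have key : ∀ l, 3 * N l ≤ 2 * N (l + 1) := fun l =>
    le_trans (hMN l) (le_trans (le_of_eq (hMbar l)) (hback l))
  have k0 := key 0
  have k1 := key 1
  have k2 := key 2
  have h21 : (2 : ZMod 3) + 1 = 0 := by decide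
  rw [h21] at k2
  obtain ⟨v, hv⟩ := hsurjV 0
  have hpos : 0 < N 0 := by
    apply Finset.card_pos.mpr
    exact ⟨v, by simp [hv]⟩
  norm_num at k0 k1 k2
  omega
end

section
/- Let (A,i) and (B,j) be finite connected minimal edge-indexed graphs such that (B,j) is obtained from (A,i) by collapsing a non-loop edge e with i(e) = 1. Then the set of primes dividing some index of (A,i) equals the set of primes dividing some index of (B,j). -/
section Collapse

variable {V E : Type} [DecidableEq V] (G : GraphData V E) (i : E → ℕ) (e : E)

/-- Edges of the graph obtained by collapsing the non-loop edge `e`. -/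
def collapsedEdges : Type := {f : E // f ≠ e ∧ f ≠ G.bar e}

/-- Initial vertex map after collapsing `e` (the vertex `α(e)` is merged into `ω(e)`). -/
def collapsedIni (f : collapsedEdges G e) : V :=
  if G.ini f.1 = G.ini e then G.ini (G.bar e) else G.ini f.1

/-- Indexing after collapsing `e`: indices of edges issuing from `α(e)` get multiplied
by `i(ē)`. -/
def collapsedIdx (f : collapsedEdges G e) : ℕ :=
  if G.ini f.1 = G.ini e then i f.1 * i (G.bar e) else i f.1

/-- Minimality of an edge-indexed graph (given by an initial-vertex map and an indexing):
no vertex has exactly one outgoing edge, of index 1. -/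
def MinimalIdx {V' E' : Type} (ini : E' → V') (idx : E' → ℕ) : Prop :=
  ∀ v : V', ¬ ((∃! f : E', ini f = v) ∧ ∀ f : E', ini f = v → idx f = 1)

end Collapse

/-- If minimal edge-indexed graphs `(A,i)` and `(B,j)` are related by collapsing a
non-loop edge `e` of index `i(e) = 1`, then the sets of primes dividing some edge index
of `(A,i)` and of `(B,j)` coincide. -/
theorem collapse_preserves_invariant_primes
    (V E : Type) [Fintype V] [Fintype E] [DecidableEq V]
    (G : GraphData V E) (i : E → ℕ) (hi : ∀ f, 0 < i f)
    (e : E) (hloop : G.ini e ≠ G.ini (G.bar e)) (hie : i e = 1)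
    (hminA : MinimalIdx G.ini i)
    (hminB : MinimalIdx (collapsedIni G e) (collapsedIdx G i e)) :
    {p : ℕ | p.Prime ∧ ∃ f : E, p ∣ i f} =
      {p : ℕ | p.Prime ∧ ∃ f : collapsedEdges G e, p ∣ collapsedIdx G i e f} := by
  ext p
  simp only [Set.mem_setOf_eq]
  constructor
  · rintro ⟨hp, f, hf⟩
    refine ⟨hp, ?_⟩
    by_cases hfe : f = e
    · exfalso
      rw [hfe, hie] at hf
      exact hp.one_lt.ne' (Nat.eq_one_of_dvd_one hf)
    by_cases hfb : f = G.bar e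
    · -- p ∣ i (bar e); find another edge g ≠ e at α(e)
      have hex : ∃ g : E, g ≠ e ∧ G.ini g = G.ini e := by
        by_contra h
        push_neg at h
        apply hminA (G.ini e)
        constructor
        · exact ⟨e, rfl, fun g hg => by
            by_contra hg'
            exact absurd hg (h g hg')⟩
        · intro g hg
          rcases eq_or_ne g e with rfl | hne
          · exact hie
          · exact absurd hg (h g hne)
      obtain ⟨g, hge, hgi⟩ := hex
      have hgb : g ≠ G.bar e := fun h => hloop (h ▸ hgi).symm
      refine ⟨⟨g, hge, hgb⟩, ?_⟩
      simp only [collapsedIdx, if_pos hgi]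
      exact Dvd.dvd.mul_left (hfb ▸ hf) _
    · refine ⟨⟨f, hfe, hfb⟩, ?_⟩
      unfold collapsedIdx
      split
      · exact Dvd.dvd.mul_right hf _
      · exact hf
  · rintro ⟨hp, f, hf⟩
    refine ⟨hp, ?_⟩
    rw [collapsedIdx] at hf
    split at hf
    · rcases hp.dvd_mul.mp hf with h | h
      · exact ⟨f.1, h⟩
      · exact ⟨G.bar e, h⟩
    · exact ⟨f.1, hf⟩
end
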